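/- arXiv:2508.09729 — 2 statements merged into one kernel-verified Lean document; each statement's English description precedes it below -/
import Mathlib

section
/- In the quantum torus algebra with generators X_{α₁}, X_{α₂} satisfying X_{α₁}X_{α₂} = q² X_{α₂}X_{α₁}, and with X_{α₁+α₂} := q^{-1} X_{α₁}X_{α₂}, the pentagon identity holds: Ψ(-X_{α₁})Ψ(-X_{α₂}) = Ψ(-X_{α₂})Ψ(-X_{α₁+α₂})Ψ(-X_{α₁}), where Ψ(x) = Σ_{d≥0} q^d x^d/(q²;q²)_d. -/
open scoped BigOperators

/-- The finite q-Pochhammer symbol `(q²;q²)_d = ∏_{k=0}^{d-1} (1 - q^{2k+2})`. -/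
noncomputable def qfac (q : ℂ) (d : ℕ) : ℂ := ∏ k ∈ Finset.range d, (1 - q ^ (2 * k + 2))

/-- `X_{α₁}` acting in the standard module (with basis indexed by `ℕ`, extended by zero):
the diagonal operator `v(n) ↦ q^{2n} v(n)`. -/
noncomputable def opX1 (q : ℂ) (v : ℕ → ℂ) : ℕ → ℂ := fun n => q ^ (2 * n) * v n

/-- `X_{α₂}` acting in the standard module: the shift operator `v(n) ↦ v(n-1)`. -/
def opX2 (v : ℕ → ℂ) : ℕ → ℂ := fun n => if n = 0 then 0 else v (n - 1)

/-- The operator `Ψ(-X_{α₁})`, where `Ψ(u) = Σ_{d≥0} q^d u^d/(q²;q²)_d`;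
it acts diagonally by the scalar `Ψ(-q^{2n})`. -/
noncomputable def PsiX1 (q : ℂ) (v : ℕ → ℂ) : ℕ → ℂ :=
  fun n => (∑' d : ℕ, q ^ d * (-q ^ (2 * n)) ^ d / qfac q d) * v n

/-- The operator `Ψ(-X_{α₂})`, acting by `v(n) ↦ Σ_{d≤n} (-1)^d q^d v(n-d)/(q²;q²)_d`. -/
noncomputable def PsiX2 (q : ℂ) (v : ℕ → ℂ) : ℕ → ℂ :=
  fun n => ∑ d ∈ Finset.range (n + 1), (-1) ^ d * q ^ d / qfac q d * v (n - d)

/-- The operator `Ψ(-X_{α₁+α₂})` for `X_{α₁+α₂} = q⁻¹ X_{α₁} X_{α₂}`. -/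
noncomputable def PsiX12 (q : ℂ) (v : ℕ → ℂ) : ℕ → ℂ :=
  fun n => ∑ d ∈ Finset.range (n + 1),
    (-1) ^ d * q ^ (d * (2 * n + 1 - d)) / qfac q d * v (n - d)

/-! ### Auxiliary lemmas -/

lemma qpow_ne_one {q : ℂ} (hq : ‖q‖ < 1) {k : ℕ} (hk : k ≠ 0) : q ^ k ≠ 1 := by
  intro h
  have : ‖q ^ k‖ < 1 := by
    rw [norm_pow]
    exact pow_lt_one₀ (norm_nonneg q) hq hk
  rw [h, norm_one] at this
  exact lt_irrefl 1 this

lemma qfac_zero (q : ℂ) : qfac q 0 = 1 := by simp [qfac]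

lemma qfac_succ (q : ℂ) (d : ℕ) : qfac q (d + 1) = qfac q d * (1 - q ^ (2 * d + 2)) := by
  simp [qfac, Finset.prod_range_succ]

lemma one_sub_qpow_ne_zero {q : ℂ} (hq : ‖q‖ < 1) {k : ℕ} (hk : k ≠ 0) :
    (1 : ℂ) - q ^ k ≠ 0 := by
  intro h
  exact qpow_ne_one hq hk (by linear_combination -h)

lemma qfac_ne_zero {q : ℂ} (hq : ‖q‖ < 1) (d : ℕ) : qfac q d ≠ 0 := by
  induction d with
  | zero => simp [qfac_zero]
  | succ d ih =>
    rw [qfac_succ]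
    exact mul_ne_zero ih (one_sub_qpow_ne_zero hq (by omega))

/-- The value `Ψ(-q^{2m})` of the quantum dilogarithm. -/
noncomputable def Fs (q : ℂ) (m : ℕ) : ℂ := ∑' d : ℕ, (-q ^ (2 * m + 1)) ^ d / qfac q d

lemma summable_Fs {q : ℂ} (hq : ‖q‖ < 1) (hq0 : q ≠ 0) (m : ℕ) :
    Summable (fun d : ℕ => (-q ^ (2 * m + 1)) ^ d / qfac q d) := by
  apply summable_of_ratio_test_tendsto_lt_one (l := ‖q ^ (2 * m + 1)‖)
  · rw [norm_pow]
    exact pow_lt_one₀ (norm_nonneg q) hq (by omega)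
  · filter_upwards with d
    exact div_ne_zero (pow_ne_zero d (neg_ne_zero.mpr (pow_ne_zero _ hq0)))
      (qfac_ne_zero hq d)
  · have h1 : Filter.Tendsto (fun d : ℕ => (1 : ℂ) - q ^ (2 * d + 2)) Filter.atTop
        (nhds 1) := by
      have h0 : Filter.Tendsto (fun d : ℕ => q ^ (2 * d + 2)) Filter.atTop (nhds 0) := by
        have := tendsto_pow_atTop_nhds_zero_of_norm_lt_one hq
        have h2 : Filter.Tendsto (fun d : ℕ => 2 * d + 2) Filter.atTop Filter.atTop := by
          apply Filter.tendsto_atTop_mono (fun d => by omega : ∀ d : ℕ, d ≤ 2 * d + 2)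
          exact Filter.tendsto_id
        exact this.comp h2
      simpa using (tendsto_const_nhds.sub h0 :
        Filter.Tendsto (fun d : ℕ => (1 : ℂ) - q ^ (2 * d + 2)) Filter.atTop (nhds (1 - 0)))
    have h2 : Filter.Tendsto (fun d : ℕ => ‖q ^ (2 * m + 1)‖ / ‖(1 : ℂ) - q ^ (2 * d + 2)‖)
        Filter.atTop (nhds (‖q ^ (2 * m + 1)‖ / ‖(1 : ℂ)‖)) := by
      exact Filter.Tendsto.div tendsto_const_nhds (h1.norm) (by simp)
    simp only [norm_one, div_one] at h2
    apply h2.congr'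
    filter_upwards with d
    have hfd : ‖qfac q d‖ ≠ 0 := norm_ne_zero_iff.mpr (qfac_ne_zero hq d)
    have hA : (‖q‖ : ℝ) ^ (2 * m + 1) ≠ 0 := pow_ne_zero _ (norm_ne_zero_iff.mpr hq0)
    have hs : ‖(1 : ℂ) - q ^ (2 * d + 2)‖ ≠ 0 :=
      norm_ne_zero_iff.mpr (one_sub_qpow_ne_zero hq (by omega))
    simp only [qfac_succ, norm_div, norm_pow, norm_neg, norm_mul]
    have gen : ∀ a y z : ℝ, a ≠ 0 → y ≠ 0 → z ≠ 0 →
        a / z = a ^ (d + 1) / (y * z) / (a ^ d / y) := by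
      intro a y z ha hy hz
      field_simp
      ring
    exact gen _ _ _ hA hfd hs

lemma Fs_succ {q : ℂ} (hq : ‖q‖ < 1) (hq0 : q ≠ 0) (m : ℕ) :
    Fs q (m + 1) = (1 + q ^ (2 * m + 1)) * Fs q m := by
  have ha := summable_Fs hq hq0 m
  set A := -q ^ (2 * m + 1) with hA
  have hAq : -q ^ (2 * (m + 1) + 1) = q ^ 2 * A := by rw [hA]; ring
  have hc : Summable (fun d : ℕ =>
      if d = 0 then (0 : ℂ) else -A * (A ^ (d - 1) / qfac q (d - 1))) := by
    rw [← summable_nat_add_iff 1]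
    simpa using (ha.mul_left (-A))
  have hterm : ∀ d : ℕ, (q ^ 2 * A) ^ d / qfac q d =
      A ^ d / qfac q d + (if d = 0 then (0 : ℂ) else -A * (A ^ (d - 1) / qfac q (d - 1))) := by
    intro d
    cases d with
    | zero => simp
    | succ d =>
      simp only [Nat.succ_ne_zero, if_neg, reduceIte, Nat.add_sub_cancel]
      rw [qfac_succ]
      have h1 : qfac q d ≠ 0 := qfac_ne_zero hq d
      have h2 : (1 : ℂ) - q ^ (2 * d + 2) ≠ 0 := one_sub_qpow_ne_zero hq (by omega)
      field_simp
      ring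
  have hsum2 : Summable (fun d : ℕ => A ^ d / qfac q d +
      (if d = 0 then (0 : ℂ) else -A * (A ^ (d - 1) / qfac q (d - 1)))) := ha.add hc
  calc Fs q (m + 1) = ∑' d : ℕ, (q ^ 2 * A) ^ d / qfac q d := by
        unfold Fs; rw [← hAq]
    _ = ∑' d : ℕ, (A ^ d / qfac q d +
        (if d = 0 then (0 : ℂ) else -A * (A ^ (d - 1) / qfac q (d - 1)))) := by
        exact tsum_congr hterm
    _ = Fs q m + ∑' d : ℕ, (if d = 0 then (0 : ℂ)
          else -A * (A ^ (d - 1) / qfac q (d - 1))) := Summable.tsum_add ha hc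
    _ = (1 + q ^ (2 * m + 1)) * Fs q m := by
        rw [Summable.tsum_eq_zero_add hc]
        simp only [Nat.succ_ne_zero, if_false, reduceIte, Nat.add_sub_cancel, zero_add]
        rw [tsum_mul_left]
        unfold Fs
        rw [hA]
        ring

lemma Fs_prod {q : ℂ} (hq : ‖q‖ < 1) (hq0 : q ≠ 0) (m e : ℕ) :
    Fs q (m + e) = (∏ k ∈ Finset.range e, (1 + q ^ (2 * (m + k) + 1))) * Fs q m := by
  induction e with
  | zero => simp
  | succ e ih =>
    have : m + (e + 1) = (m + e) + 1 := by omega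
    rw [this, Fs_succ hq hq0, ih, Finset.prod_range_succ]
    ring

lemma keyT {q : ℂ} (hq : ‖q‖ < 1) (m e : ℕ) :
    (1 - q ^ (2 * e + 2)) *
      ∑ b ∈ Finset.range (e + 2), q ^ (2 * m * b + b ^ 2) / (qfac q b * qfac q (e + 1 - b)) =
    (1 + q ^ (2 * (m + e) + 1)) *
      ∑ b ∈ Finset.range (e + 1), q ^ (2 * m * b + b ^ 2) / (qfac q b * qfac q (e - b)) := by
  rw [Finset.mul_sum]
  have split : ∀ b ∈ Finset.range (e + 2),
      (1 - q ^ (2 * e + 2)) * (q ^ (2 * m * b + b ^ 2) / (qfac q b * qfac q (e + 1 - b)))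
      = (1 - q ^ (2 * (e + 1 - b))) * (q ^ (2 * m * b + b ^ 2) / (qfac q b * qfac q (e + 1 - b)))
        + q ^ (2 * (e + 1 - b)) * (1 - q ^ (2 * b)) *
            (q ^ (2 * m * b + b ^ 2) / (qfac q b * qfac q (e + 1 - b))) := by
    intro b hb
    rw [Finset.mem_range] at hb
    have hpow : q ^ (2 * (e + 1 - b)) * q ^ (2 * b) = q ^ (2 * e + 2) := by
      rw [← pow_add]; congr 1; omega
    linear_combination (q ^ (2 * m * b + b ^ 2) / (qfac q b * qfac q (e + 1 - b))) * hpow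
  rw [Finset.sum_congr rfl split, Finset.sum_add_distrib]
  have first : ∑ b ∈ Finset.range (e + 2),
      (1 - q ^ (2 * (e + 1 - b))) * (q ^ (2 * m * b + b ^ 2) / (qfac q b * qfac q (e + 1 - b)))
      = ∑ b ∈ Finset.range (e + 1), q ^ (2 * m * b + b ^ 2) / (qfac q b * qfac q (e - b)) := by
    rw [Finset.sum_range_succ]
    simp only [Nat.sub_self, mul_zero, pow_zero, sub_self, zero_mul, add_zero]
    apply Finset.sum_congr rfl
    intro b hb
    rw [Finset.mem_range] at hb
    obtain ⟨c, rfl⟩ : ∃ c, e = b + c := ⟨e - b, by omega⟩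
    rw [show b + c + 1 - b = c + 1 from by omega, show b + c - b = c from by omega, qfac_succ]
    have hz : (1 : ℂ) - q ^ (2 * c + 2) ≠ 0 := one_sub_qpow_ne_zero hq (by omega)
    have hfb : qfac q b ≠ 0 := qfac_ne_zero hq b
    have hfe : qfac q c ≠ 0 := qfac_ne_zero hq c
    field_simp
    ring
  have second : ∑ b ∈ Finset.range (e + 2),
      q ^ (2 * (e + 1 - b)) * (1 - q ^ (2 * b)) *
        (q ^ (2 * m * b + b ^ 2) / (qfac q b * qfac q (e + 1 - b)))
      = q ^ (2 * (m + e) + 1) *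
        ∑ b ∈ Finset.range (e + 1), q ^ (2 * m * b + b ^ 2) / (qfac q b * qfac q (e - b)) := by
    rw [Finset.sum_range_succ']
    simp only [Nat.mul_zero, pow_zero, sub_self, mul_zero, zero_mul, mul_one, add_zero, zero_add]
    rw [Finset.mul_sum]
    apply Finset.sum_congr rfl
    intro b hb
    rw [Finset.mem_range] at hb
    obtain ⟨c, rfl⟩ : ∃ c, e = b + c := ⟨e - b, by omega⟩
    rw [show b + c + 1 - (b + 1) = c from by omega, show b + c - b = c from by omega,
      show 2 * (b + 1) = 2 * b + 2 from by omega, qfac_succ]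
    have hz : (1 : ℂ) - q ^ (2 * b + 2) ≠ 0 := one_sub_qpow_ne_zero hq (by omega)
    have hfb : qfac q b ≠ 0 := qfac_ne_zero hq b
    have hfe : qfac q c ≠ 0 := qfac_ne_zero hq c
    field_simp
    ring
  rw [first, second]
  ring

lemma key {q : ℂ} (hq : ‖q‖ < 1) (m e : ℕ) :
    ∏ k ∈ Finset.range e, (1 + q ^ (2 * (m + k) + 1)) =
    qfac q e *
      ∑ b ∈ Finset.range (e + 1), q ^ (2 * m * b + b ^ 2) / (qfac q b * qfac q (e - b)) := by
  induction e with
  | zero => simp [qfac_zero]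
  | succ e ih =>
    rw [Finset.prod_range_succ, ih, qfac_succ]
    have hT := keyT hq m e
    rw [show e + 2 = e + 1 + 1 by omega] at hT
    linear_combination (-qfac q e) * hT

lemma tri (n : ℕ) (f : ℕ → ℕ → ℂ) :
    ∑ a ∈ Finset.range (n + 1), ∑ b ∈ Finset.range (n + 1 - a), f a b
      = ∑ e ∈ Finset.range (n + 1), ∑ b ∈ Finset.range (e + 1), f (e - b) b := by
  rw [Finset.sum_sigma', Finset.sum_sigma']
  apply Finset.sum_nbij' (i := fun p => ⟨p.1 + p.2, p.2⟩) (j := fun p => ⟨p.1 - p.2, p.2⟩)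
  · intro p hp
    simp only [Finset.mem_sigma, Finset.mem_range] at hp ⊢
    omega
  · intro p hp
    simp only [Finset.mem_sigma, Finset.mem_range] at hp ⊢
    omega
  · intro p hp
    simp only [Finset.mem_sigma, Finset.mem_range] at hp
    ext <;> simp
  · intro p hp
    simp only [Finset.mem_sigma, Finset.mem_range] at hp
    ext <;> simp <;> omega
  · intro p hp
    simp only [Finset.mem_sigma, Finset.mem_range] at hp
    simp [Nat.add_sub_cancel]

/-- In the quantum torus with `X_{α₁} X_{α₂} = q² X_{α₂} X_{α₁}` (realized faithfully on the
standard module, as recorded by the first conjunct), the pentagon identity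
`Ψ(-X_{α₁})Ψ(-X_{α₂}) = Ψ(-X_{α₂})Ψ(-X_{α₁+α₂})Ψ(-X_{α₁})` holds (second conjunct),
where `X_{α₁+α₂} = q⁻¹ X_{α₁} X_{α₂}`. -/
theorem pentagon_identity (q : ℂ) (hq : ‖q‖ < 1) (hq0 : q ≠ 0) :
    (∀ v : ℕ → ℂ, opX1 q (opX2 v) = fun n => q ^ 2 * opX2 (opX1 q v) n) ∧
    (∀ v : ℕ → ℂ, PsiX1 q (PsiX2 q v) = PsiX2 q (PsiX12 q (PsiX1 q v))) := by
  constructor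
  · intro v
    funext n
    cases n with
    | zero => simp [opX1, opX2]
    | succ k =>
      simp only [opX1, opX2, Nat.succ_ne_zero, if_neg, Nat.add_sub_cancel, reduceIte]
      ring
  · intro v
    funext n
    simp only [PsiX1, PsiX2, PsiX12]
    have FsEq : ∀ k : ℕ, (∑' d : ℕ, q ^ d * (-q ^ (2 * k)) ^ d / qfac q d) = Fs q k := by
      intro k
      unfold Fs
      apply tsum_congr
      intro d
      rw [← mul_pow]
      have : q * -q ^ (2 * k) = -q ^ (2 * k + 1) := by ring
      rw [this]
    simp only [FsEq]
    rw [Finset.mul_sum]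
    rw [show (∑ a ∈ Finset.range (n + 1), (-1 : ℂ) ^ a * q ^ a / qfac q a *
          ∑ b ∈ Finset.range (n - a + 1), (-1) ^ b * q ^ (b * (2 * (n - a) + 1 - b)) / qfac q b *
            (Fs q (n - a - b) * v (n - a - b)))
        = ∑ a ∈ Finset.range (n + 1), ∑ b ∈ Finset.range (n + 1 - a),
            ((-1 : ℂ) ^ a * q ^ a / qfac q a *
              ((-1) ^ b * q ^ (b * (2 * (n - a) + 1 - b)) / qfac q b *
                (Fs q (n - a - b) * v (n - a - b)))) from by
      apply Finset.sum_congr rfl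
      intro a ha
      rw [Finset.mem_range] at ha
      rw [Finset.mul_sum, show n + 1 - a = n - a + 1 from by omega]]
    rw [tri n (fun a b => (-1 : ℂ) ^ a * q ^ a / qfac q a *
          ((-1) ^ b * q ^ (b * (2 * (n - a) + 1 - b)) / qfac q b *
            (Fs q (n - a - b) * v (n - a - b))))]
    apply Finset.sum_congr rfl
    intro e he
    rw [Finset.mem_range] at he
    obtain ⟨m, rfl⟩ : ∃ m, n = m + e := ⟨n - e, by omega⟩
    rw [show m + e - e = m from by omega]
    have perb : ∀ b ∈ Finset.range (e + 1),
        (-1 : ℂ) ^ (e - b) * q ^ (e - b) / qfac q (e - b) *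
          ((-1) ^ b * q ^ (b * (2 * (m + e - (e - b)) + 1 - b)) / qfac q b *
            (Fs q (m + e - (e - b) - b) * v (m + e - (e - b) - b)))
        = (-1 : ℂ) ^ e * q ^ e * (q ^ (2 * m * b + b ^ 2) / (qfac q b * qfac q (e - b))) *
            (Fs q m * v m) := by
      intro b hb
      rw [Finset.mem_range] at hb
      obtain ⟨c, rfl⟩ : ∃ c, e = b + c := ⟨e - b, by omega⟩
      rw [show b + c - b = c from by omega, show m + (b + c) - c = m + b from by omega,
        show m + b - b = m from by omega,
        show b * (2 * (m + b) + 1 - b) = b * (2 * m + b + 1) from by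
          have : 2 * (m + b) + 1 - b = 2 * m + b + 1 := by omega
          rw [this]]
      have hfb : qfac q b ≠ 0 := qfac_ne_zero hq b
      have hfc : qfac q c ≠ 0 := qfac_ne_zero hq c
      field_simp
      ring
    rw [Finset.sum_congr rfl perb]
    have hS := key hq m e
    have hfe : qfac q e ≠ 0 := qfac_ne_zero hq e
    rw [Fs_prod hq hq0 m e, hS]
    rw [← Finset.sum_mul, ← Finset.mul_sum]
    field_simp
end

section
/- Let Q be the symmetrization of the A_m Dynkin quiver in any orientation, i.e., the symmetric matrix with Q_{ij} = 1 if |i-j| = 1 and 0 otherwise. Then in the rank-2m quantum torus algebra with generators x̂_i, ŷ_i (ŷ_i x̂_j = q^{2δ_{ij}} x̂_j ŷ_i) acting on the module with basis |d₁,…,d_m⟩ (x̂_i shifts d_i by 1, ŷ_i acts by q^{2d_i}), the vector Ψ(q^{-1}x̂₁ŷ₂)Ψ(q^{-1}x̂₂ŷ₃)⋯Ψ(q^{-1}x̂_{m-1}ŷ_m)Ψ(q^{-1}x̂_m)|0,…,0⟩ has coefficients Σ_d (-q)^{2Σ_{i=1}^{m-1} d_i d_{i+1}} ∏_i x_i^{d_i}/(q²;q²)_{d_i}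 in the wavefunction representation ⟨x|d⟩ = ∏ x_i^{d_i}; that is, its wavefunction equals the motivic generating series P_Q(x,q). -/
open scoped BigOperators

/-- Extension by zero of a tuple indexed by `Fin n` to all of `ℕ`. -/
def pad (n : ℕ) (l : Fin n → ℕ) : ℕ → ℕ := fun i => if h : i < n then l ⟨i, h⟩ else 0

/-- The operator `Ψ(q⁻¹ x̂_i ŷ_j)` acting on the module with basis `|d⟩`, `d ∈ ℕ^m`
(where `x̂_i` shifts `d_i` by one and `ŷ_i` acts by `q^{2 d_i}`), written on
coefficient vectors:  `(Ψ(q⁻¹x̂_iŷ_j) v)(d) = Σ_{k ≤ d_i} q^{2 k d_j} v(d - k e_i)/(q²;q²)_k`. -/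
noncomputable def psiStep (q : ℂ) {m : ℕ} (i j : Fin m) (v : (Fin m → ℕ) → ℂ) :
    (Fin m → ℕ) → ℂ :=
  fun d => ∑ k ∈ Finset.range (d i + 1),
    q ^ (2 * k * d j) / qfac q k * v (Function.update d i (d i - k))

/-- The operator `Ψ(q⁻¹ x̂_i)` on coefficient vectors:
`(Ψ(q⁻¹x̂_i) v)(d) = Σ_{k ≤ d_i} v(d - k e_i)/(q²;q²)_k`. -/
noncomputable def psiLastStep (q : ℂ) {m : ℕ} (i : Fin m) (v : (Fin m → ℕ) → ℂ) :
    (Fin m → ℕ) → ℂ :=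
  fun d => ∑ k ∈ Finset.range (d i + 1),
    (1 / qfac q k) * v (Function.update d i (d i - k))

/-- The vector `Ψ(q⁻¹x̂₁ŷ₂)Ψ(q⁻¹x̂₂ŷ₃)⋯Ψ(q⁻¹x̂_{m-1}ŷ_m)Ψ(q⁻¹x̂_m)|0,…,0⟩`, built by
applying the operators right-to-left to the delta vector at `0`:  `chainVec q m j` is
the result of applying the last `j` operators of the product. -/
noncomputable def chainVec (q : ℂ) (m : ℕ) : ℕ → ((Fin m → ℕ) → ℂ)
  | 0 => fun d => if d = 0 then 1 else 0
  | j + 1 =>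
    if h : m - j - 1 + 1 < m then
      psiStep q ⟨m - j - 1, by omega⟩ ⟨m - j - 1 + 1, h⟩ (chainVec q m j)
    else if h2 : m - j - 1 < m then
      psiLastStep q ⟨m - j - 1, h2⟩ (chainVec q m j)
    else chainVec q m j

lemma pad_update (m : ℕ) (d : Fin m → ℕ) (i : ℕ) (h : i < m) (v : ℕ) (l : ℕ) :
    pad m (Function.update d ⟨i, h⟩ v) l = if l = i then v else pad m d l := by
  unfold pad
  by_cases hl : l < m
  · simp only [dif_pos hl]
    by_cases he : l = i
    · subst he; simp
    · rw [Function.update_of_ne (by simp [Fin.ext_iff, he]), if_neg he]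
  · have hne : l ≠ i := by omega
    simp [dif_neg hl, hne]

lemma chainVec_formula (q : ℂ) (m : ℕ) (hm : 1 ≤ m) :
    ∀ j ≤ m, chainVec q m j = fun d =>
      if ∀ l < m - j, pad m d l = 0 then
        q ^ (2 * ∑ i ∈ Finset.Ico (m - j) (m - 1), pad m d i * pad m d (i + 1)) /
          ∏ i ∈ Finset.Ico (m - j) m, qfac q (pad m d i)
      else 0 := by
  intro j
  induction j with
  | zero =>
    intro _
    funext d
    show (if d = 0 then 1 else 0) = _
    have h1 : (∀ l < m - 0, pad m d l = 0) ↔ d = 0 := by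
      constructor
      · intro h; funext l
        have := h l (by omega)
        simpa [pad] using this
      · rintro rfl l hl; simp [pad]
    rw [Finset.Ico_eq_empty (by omega : ¬ m - 0 < m - 1),
        Finset.Ico_eq_empty (by omega : ¬ m - 0 < m)]
    by_cases hd : d = 0
    · rw [if_pos hd, if_pos (h1.mpr hd)]; simp
    · rw [if_neg hd, if_neg (fun hc => hd (h1.mp hc))]
  | succ j IH =>
    intro hj1
    have hjm : j < m := by omega
    have IH' := IH (by omega)
    funext d
    rw [chainVec, IH']
    set a := m - j - 1 with ha
    have ham : a < m := by omega
    have hmj : m - j = a + 1 := by omega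
    have hmj1 : m - (j + 1) = a := by omega
    by_cases hj0 : j = 0
    · -- psiLastStep branch
      subst hj0
      rw [dif_neg (by omega), dif_pos ham]
      show ∑ k ∈ Finset.range (d ⟨a, ham⟩ + 1), (1 / qfac q k) *
          (if ∀ l < m - 0, pad m (Function.update d ⟨a, ham⟩ (d ⟨a, ham⟩ - k)) l = 0 then
            q ^ (2 * ∑ i ∈ Finset.Ico (m - 0) (m - 1),
              pad m (Function.update d ⟨a, ham⟩ (d ⟨a, ham⟩ - k)) i *
              pad m (Function.update d ⟨a, ham⟩ (d ⟨a, ham⟩ - k)) (i + 1)) /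
              ∏ i ∈ Finset.Ico (m - 0) m,
                qfac q (pad m (Function.update d ⟨a, ham⟩ (d ⟨a, ham⟩ - k)) i)
          else 0) = _
      have hDa : pad m d a = d ⟨a, ham⟩ := by simp [pad, ham]
      have hIcoE : Finset.Ico (m - 0) (m - 1) = ∅ := Finset.Ico_eq_empty (by omega)
      have hIcoE2 : Finset.Ico (m - 0) m = ∅ := Finset.Ico_eq_empty (by omega)
      by_cases hcond : ∀ l < m - (0 + 1), pad m d l = 0
      · rw [if_pos (hmj1 ▸ hcond)]
        rw [Finset.sum_eq_single_of_mem (d ⟨a, ham⟩) (Finset.self_mem_range_succ _)]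
        · rw [if_pos, hIcoE, hIcoE2]
          · have h1 : Finset.Ico (m - (0 + 1)) (m - 1) = ∅ := Finset.Ico_eq_empty (by omega)
            have h2 : Finset.Ico (m - (0 + 1)) m = {a} := by
              rw [hmj1, show m = a + 1 by omega]
              exact Nat.Ico_succ_singleton _
            rw [h1, h2, Finset.sum_empty, Finset.prod_empty, Finset.sum_empty,
              Finset.prod_singleton, hDa]
            simp
          · intro l hl
            rw [pad_update]
            by_cases hla : l = a
            · rw [if_pos hla]; omega
            · rw [if_neg hla]; exact hcond l (by omega)
        · intro k hk hkne
          rw [if_neg, mul_zero]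
          intro hall
          have := hall a (by omega)
          rw [pad_update, if_pos rfl] at this
          simp only [Finset.mem_range] at hk
          omega
      · rw [if_neg (by rw [hmj1] at hcond ⊢; exact hcond)]
        apply Finset.sum_eq_zero
        intro k hk
        push_neg at hcond
        obtain ⟨l, hl, hlne⟩ := hcond
        rw [if_neg, mul_zero]
        intro hall
        have := hall l (by omega)
        rw [pad_update, if_neg (by omega)] at this
        exact hlne this
    · -- psiStep branch, j >= 1
      have hstep : a + 1 < m := by omega
      rw [dif_pos hstep]
      show ∑ k ∈ Finset.range (d ⟨a, by omega⟩ + 1),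
          q ^ (2 * k * d ⟨a + 1, hstep⟩) / qfac q k *
          (if ∀ l < m - j, pad m (Function.update d ⟨a, by omega⟩ (d ⟨a, by omega⟩ - k)) l = 0 then
            q ^ (2 * ∑ i ∈ Finset.Ico (m - j) (m - 1),
              pad m (Function.update d ⟨a, by omega⟩ (d ⟨a, by omega⟩ - k)) i *
              pad m (Function.update d ⟨a, by omega⟩ (d ⟨a, by omega⟩ - k)) (i + 1)) /
              ∏ i ∈ Finset.Ico (m - j) m,
                qfac q (pad m (Function.update d ⟨a, by omega⟩ (d ⟨a, by omega⟩ - k)) i)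
          else 0) = _
      have hDa : pad m d a = d ⟨a, ham⟩ := by simp [pad, ham]
      have hDa1 : pad m d (a + 1) = d ⟨a + 1, hstep⟩ := by simp [pad, hstep]
      by_cases hcond : ∀ l < m - (j + 1), pad m d l = 0
      · rw [if_pos (hmj1 ▸ hcond)]
        rw [Finset.sum_eq_single_of_mem (d ⟨a, ham⟩) (Finset.self_mem_range_succ _)]
        · rw [if_pos]
          · have hsum : ∑ i ∈ Finset.Ico (m - j) (m - 1),
                pad m (Function.update d ⟨a, ham⟩ (d ⟨a, ham⟩ - d ⟨a, ham⟩)) i *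
                pad m (Function.update d ⟨a, ham⟩ (d ⟨a, ham⟩ - d ⟨a, ham⟩)) (i + 1) =
                ∑ i ∈ Finset.Ico (m - j) (m - 1), pad m d i * pad m d (i + 1) := by
              apply Finset.sum_congr rfl
              intro l hl
              simp only [Finset.mem_Ico] at hl
              rw [pad_update, pad_update, if_neg (by omega), if_neg (by omega)]
            have hprod : ∏ i ∈ Finset.Ico (m - j) m,
                qfac q (pad m (Function.update d ⟨a, ham⟩ (d ⟨a, ham⟩ - d ⟨a, ham⟩)) i) =
                ∏ i ∈ Finset.Ico (m - j) m, qfac q (pad m d i) := by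
              apply Finset.prod_congr rfl
              intro l hl
              simp only [Finset.mem_Ico] at hl
              rw [pad_update, if_neg (by omega)]
            rw [hsum, hprod, hmj1, hmj]
            have hins : Finset.Ico a (m - 1) = insert a (Finset.Ico (a + 1) (m - 1)) := by
              rw [Finset.insert_Ico_add_one_left_eq_Ico (by omega)]
            have hins2 : Finset.Ico a m = insert a (Finset.Ico (a + 1) m) := by
              rw [Finset.insert_Ico_add_one_left_eq_Ico (by omega)]
            rw [hins, hins2, Finset.sum_insert (by simp), Finset.prod_insert (by simp),
              hDa, hDa1]
            rw [div_mul_div_comm, ← pow_add]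
            congr 2
            ring
          · intro l hl
            rw [pad_update]
            by_cases hla : l = a
            · rw [if_pos hla]; omega
            · rw [if_neg hla]; exact hcond l (by omega)
        · intro k hk hkne
          rw [if_neg, mul_zero]
          intro hall
          have := hall a (by omega)
          rw [pad_update, if_pos rfl] at this
          simp only [Finset.mem_range] at hk
          omega
      · rw [if_neg (by rw [hmj1] at hcond ⊢; exact hcond)]
        apply Finset.sum_eq_zero
        intro k hk
        push_neg at hcond
        obtain ⟨l, hl, hlne⟩ := hcond
        rw [if_neg, mul_zero]
        intro hall
        have := hall l (by omega)
        rw [pad_update, if_neg (by omega)] at this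
        exact hlne this

/-- The wavefunction of `Ψ(q⁻¹x̂₁ŷ₂)⋯Ψ(q⁻¹x̂_{m-1}ŷ_m)Ψ(q⁻¹x̂_m)|0,…,0⟩` is the motivic
generating series of the symmetrized `A_m` quiver (adjacency `Q_{ij} = 1` iff `|i-j|=1`):
its coefficient on `|d⟩` is `(-q)^{2Σ d_i d_{i+1}} / ∏ (q²;q²)_{d_i}`. -/
theorem chainVec_eq_motivic_series (m : ℕ) (hm : 1 ≤ m) (q : ℂ) (hq : ‖q‖ < 1)
    (hq0 : q ≠ 0) :
    chainVec q m m = fun d : Fin m → ℕ =>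
      (-q) ^ (2 * ∑ i ∈ Finset.range (m - 1), pad m d i * pad m d (i + 1)) /
        ∏ i, qfac q (d i) := by
  rw [chainVec_formula q m hm m le_rfl]
  funext d
  rw [if_pos (by intro l hl; omega)]
  have h0 : m - m = 0 := Nat.sub_self m
  have h1 : Finset.Ico (m - m) (m - 1) = Finset.range (m - 1) := by
    rw [h0]; exact (Finset.range_eq_Ico _).symm
  have h2 : Finset.Ico (m - m) m = Finset.range m := by
    rw [h0]; exact (Finset.range_eq_Ico _).symm
  rw [h1, h2]
  have h3 : (-q) ^ (2 * ∑ i ∈ Finset.range (m - 1), pad m d i * pad m d (i + 1)) =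
      q ^ (2 * ∑ i ∈ Finset.range (m - 1), pad m d i * pad m d (i + 1)) := by
    rw [pow_mul, pow_mul, neg_sq]
  have h4 : ∏ i ∈ Finset.range m, qfac q (pad m d i) = ∏ i, qfac q (d i) := by
    rw [← Fin.prod_univ_eq_prod_range (fun i => qfac q (pad m d i)) m]
    apply Finset.prod_congr rfl
    intro i _
    simp [pad, i.isLt]
  rw [h3, h4]
end
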